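/- For the generalized Sierpiński graphs of the path P_4: χρ(S^1_{P_4}) = 3, χρ(S^2_{P_4}) = 4, and χρ(S^n_{P_4}) = 5 for every n ≥ 3. -/

import Mathlib

/-- The generalized Sierpiński graph `S^n_G` of a base graph `G` on the vertex set
`[k]_0 = {0, …, k−1}`: the vertices are the words of length `n` over `[k]_0`, and two
distinct words `u, v` are adjacent iff there is an index `i` with `u j = v j` for `j < i`,
`u i` adjacent to `v i` in `G`, and `u j = v i`, `v j = u i` for all `j > i`. -/
def genSierpinski {k : ℕ} (G : SimpleGraph (Fin k)) (n : ℕ) :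
    SimpleGraph (Fin n → Fin k) where
  Adj u v := ∃ i : Fin n,
    (∀ j, j < i → u j = v j) ∧ G.Adj (u i) (v i) ∧ ∀ j, i < j → u j = v i ∧ v j = u i
  symm := by
    constructor
    rintro u v ⟨i, h1, h2, h3⟩
    exact ⟨i, fun j hj => (h1 j hj).symm, h2.symm, fun j hj => ⟨(h3 j hj).2, (h3 j hj).1⟩⟩
  loopless := by
    constructor
    rintro u ⟨i, -, h2, -⟩
    exact G.irrefl h2

/-- The Sierpiński graph `S^n_k`, i.e. the generalized Sierpiński graph of the complete
graph `K_k` on `[k]_0` (in which two vertices are adjacent iff they are distinct). -/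
def sierpinski (k n : ℕ) : SimpleGraph (Fin n → Fin k) :=
  genSierpinski (⊤ : SimpleGraph (Fin k)) n

/-- `c` is a `t`-packing coloring of `G`: every vertex gets a color in `{1, …, t}`, and any
two distinct vertices with the same color `i` are at distance greater than `i`
(equivalently, every walk between them has length greater than `i`). -/
def IsPackingColoring {V : Type*} (G : SimpleGraph V) (t : ℕ) (c : V → ℕ) : Prop :=
  (∀ v, 1 ≤ c v ∧ c v ≤ t) ∧
    ∀ u v, u ≠ v → c u = c v → ∀ p : G.Walk u v, c u < p.length

/-- The packing chromatic number `χρ(G)`: the least `t` such that `G` admits a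
`t`-packing coloring. -/
noncomputable def packingChromatic {V : Type*} (G : SimpleGraph V) : ℕ :=
  sInf {t | ∃ c : V → ℕ, IsPackingColoring G t c}

/-- The path `P_4` on `{0, 1, 2, 3}` with edges `{0,1}, {1,2}, {2,3}`. -/
def pathP4 : SimpleGraph (Fin 4) :=
  SimpleGraph.fromRel (fun u v => (u, v) ∈
    [((0 : Fin 4), (1 : Fin 4)), (1, 2), (2, 3)])

namespace SierpP4

abbrev W (n : ℕ) := Fin n → Fin 4
abbrev G (n : ℕ) : SimpleGraph (W n) := genSierpinski pathP4 n

instance pathP4.adjDec : DecidableRel pathP4.Adj := fun a b =>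
  decidable_of_iff (a ≠ b ∧ ((a, b) ∈ [((0 : Fin 4), (1 : Fin 4)), (1, 2), (2, 3)] ∨
      (b, a) ∈ [((0 : Fin 4), (1 : Fin 4)), (1, 2), (2, 3)]))
    (by unfold pathP4; exact (SimpleGraph.fromRel_adj (fun u v => (u, v) ∈ [((0 : Fin 4), (1 : Fin 4)), (1, 2), (2, 3)]) a b).symm)

lemma p4_adj' : ∀ a b : Fin 4, pathP4.Adj a b ↔ ((a : ℕ) + 1 = b ∨ (b : ℕ) + 1 = a) := by
  decide

lemma p4_adj {a b : Fin 4} :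
    pathP4.Adj a b ↔ ((a : ℕ) + 1 = b ∨ (b : ℕ) + 1 = a) := p4_adj' a b

lemma adj_zero (u v : W 0) : ¬ (G 0).Adj u v := by
  rintro ⟨i, -⟩; exact i.elim0

lemma adj_succ_iff {n : ℕ} {u v : W (n + 1)} :
    (G (n+1)).Adj u v ↔
      ((u 0 = v 0 ∧ (G n).Adj (Fin.tail u) (Fin.tail v)) ∨
       (pathP4.Adj (u 0) (v 0) ∧ ∀ j : Fin n, u j.succ = v 0 ∧ v j.succ = u 0)) := by
  constructor
  · rintro ⟨i, h1, h2, h3⟩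
    induction i using Fin.cases with
    | zero =>
      refine Or.inr ⟨h2, fun j => h3 j.succ (Fin.succ_pos j)⟩
    | succ i =>
      refine Or.inl ⟨h1 0 (Fin.succ_pos i), ⟨i, fun j hj => h1 j.succ ?_, h2, fun j hj => h3 j.succ ?_⟩⟩
      · exact Fin.succ_lt_succ_iff.mpr hj
      · exact Fin.succ_lt_succ_iff.mpr hj
  · rintro (⟨h0, i, h1, h2, h3⟩ | ⟨h2, h3⟩)
    · refine ⟨i.succ, fun j hj => ?_, h2, fun j hj => ?_⟩
      · induction j using Fin.cases with
        | zero => exact h0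
        | succ j => exact h1 j (Fin.succ_lt_succ_iff.mp hj)
      · induction j using Fin.cases with
        | zero => exact absurd hj (by simp [Fin.lt_def])
        | succ j => exact h3 j (Fin.succ_lt_succ_iff.mp hj)
    · refine ⟨0, fun j hj => absurd hj (by simp [Fin.lt_def]), h2, fun j hj => ?_⟩
      induction j using Fin.cases with
      | zero => exact absurd hj (lt_irrefl _)
      | succ j => exact h3 j

/-- constant word -/
def K {n : ℕ} (x : Fin 4) : W n := fun _ => x

@[simp] lemma tail_K {n : ℕ} (x : Fin 4) : Fin.tail (K (n := n+1) x) = K x := rfl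

@[simp] lemma K_app {n : ℕ} (x : Fin 4) (j : Fin n) : K x j = x := rfl

/-- distance from `u` to the corner `x^n` (x given as a natural number ≤ 3). -/
def dc : (n : ℕ) → W n → ℕ → ℕ
  | 0, _, _ => 0
  | (n+1), u, x =>
    let a := (u 0 : ℕ)
    if a = x then dc n (Fin.tail u) x
    else if a < x then dc n (Fin.tail u) (a+1) + (x - a) + (x - a - 1)*2*(2^n - 1) + (2^n - 1)
    else dc n (Fin.tail u) (a-1) + (a - x) + (a - x - 1)*2*(2^n - 1) + (2^n - 1)

/-- the graph distance on `S^n_{P4}`. -/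
def D : (n : ℕ) → W n → W n → ℕ
  | 0, _, _ => 0
  | (n+1), u, v =>
    let a := (u 0 : ℕ); let b := (v 0 : ℕ)
    if a = b then D n (Fin.tail u) (Fin.tail v)
    else if a < b then dc n (Fin.tail u) (a+1) + dc n (Fin.tail v) (b-1) + (b - a) + (b - a - 1)*2*(2^n - 1)
    else dc n (Fin.tail u) (a-1) + dc n (Fin.tail v) (b+1) + (a - b) + (a - b - 1)*2*(2^n - 1)

lemma dc_succ {n : ℕ} (u : W (n+1)) (x : ℕ) :
    dc (n+1) u x =
    (if (u 0 : ℕ) = x then dc n (Fin.tail u) x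
     else if (u 0 : ℕ) < x then dc n (Fin.tail u) ((u 0 : ℕ)+1) + (x - (u 0 : ℕ)) + (x - (u 0 : ℕ) - 1)*2*(2^n - 1) + (2^n - 1)
     else dc n (Fin.tail u) ((u 0 : ℕ)-1) + ((u 0 : ℕ) - x) + ((u 0 : ℕ) - x - 1)*2*(2^n - 1) + (2^n - 1)) := rfl

lemma D_succ {n : ℕ} (u v : W (n+1)) :
    D (n+1) u v =
    (if (u 0 : ℕ) = (v 0 : ℕ) then D n (Fin.tail u) (Fin.tail v)
     else if (u 0 : ℕ) < (v 0 : ℕ) then dc n (Fin.tail u) ((u 0 : ℕ)+1) + dc n (Fin.tail v) ((v 0 : ℕ)-1) + ((v 0 : ℕ) - (u 0 : ℕ)) + ((v 0 : ℕ) - (u 0 : ℕ) - 1)*2*(2^n - 1)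
     else dc n (Fin.tail u) ((u 0 : ℕ)-1) + dc n (Fin.tail v) ((v 0 : ℕ)+1) + ((u 0 : ℕ) - (v 0 : ℕ)) + ((u 0 : ℕ) - (v 0 : ℕ) - 1)*2*(2^n - 1)) := rfl

/-- value of dc at corners -/
lemma dc_K {n : ℕ} (y : Fin 4) (x : ℕ) (hx : x ≤ 3) :
    dc n (K y) x = (2^n - 1) * (((y:ℕ) - x) + (x - (y:ℕ))) := by
  induction n generalizing x with
  | zero => simp [dc]
  | succ n ih =>
    have h2 : (2:ℕ)^(n+1) = 2 * 2^n := by ring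
    have h1 : (1:ℕ) ≤ 2^n := Nat.one_le_two_pow
    have hy : (y : ℕ) ≤ 3 := by omega
    rw [dc_succ]
    rw [show (K (n := n+1) y 0) = y from rfl]
    simp only [tail_K, K_app]
    rcases Nat.lt_trichotomy (y : ℕ) x with h | h | h
    · rw [if_neg (by omega), if_pos h, ih ((y:ℕ)+1) (by omega)]
      have e1 : (y:ℕ) - ((y:ℕ)+1) + (((y:ℕ)+1) - (y:ℕ)) = 1 := by omega
      rw [e1, Nat.mul_one]
      have e2 : (y:ℕ) - x = 0 := by omega
      rw [e2]
      have hd : x - (y:ℕ) = 1 ∨ x - (y:ℕ) = 2 ∨ x - (y:ℕ) = 3 := by omega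
      rcases hd with hd | hd | hd <;> rw [hd] <;> norm_num <;> omega
    · rw [if_pos h, ih x hx, h]
      simp [Nat.sub_self]
    · rw [if_neg (by omega), if_neg (by omega), ih ((y:ℕ)-1) (by omega)]
      have e1 : (y:ℕ) - ((y:ℕ)-1) + (((y:ℕ)-1) - (y:ℕ)) = 1 := by omega
      rw [e1, Nat.mul_one]
      have e2 : x - (y:ℕ) = 0 := by omega
      rw [e2]
      have hd : (y:ℕ) - x = 1 ∨ (y:ℕ) - x = 2 ∨ (y:ℕ) - x = 3 := by omega
      rcases hd with hd | hd | hd <;> rw [hd] <;> norm_num <;> omega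

end SierpP4
namespace SierpP4

lemma D_self : ∀ {n : ℕ} (u : W n), D n u u = 0 := by
  intro n
  induction n with
  | zero => intro u; rfl
  | succ n ih => intro u; rw [D_succ, if_pos rfl]; exact ih _

lemma D_symm : ∀ {n : ℕ} (u v : W n), D n u v = D n v u := by
  intro n
  induction n with
  | zero => intro u v; rfl
  | succ n ih =>
    intro u v
    rw [D_succ, D_succ]
    rcases Nat.lt_trichotomy ((u 0 : ℕ)) ((v 0 : ℕ)) with h | h | h
    · rw [if_neg (by omega), if_pos h, if_neg (by omega), if_neg (by omega)]
      omega
    · rw [if_pos h, if_pos h.symm, ih]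
    · rw [if_neg (by omega), if_neg (by omega), if_neg (by omega), if_pos h]
      omega

lemma D_K : ∀ {n : ℕ} (u : W n) (x : Fin 4), D n u (K x) = dc n u (x : ℕ) := by
  intro n
  induction n with
  | zero => intro u x; rfl
  | succ n ih =>
    intro u x
    have h1 : (1:ℕ) ≤ 2^n := Nat.one_le_two_pow
    rw [D_succ, dc_succ]
    rw [show (K (n := n+1) x 0) = x from rfl]
    simp only [K_app, tail_K]
    rcases Nat.lt_trichotomy ((u 0 : ℕ)) ((x : ℕ)) with h | h | h
    · rw [if_neg (by omega), if_pos h, if_neg (by omega), if_pos h,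
        dc_K x ((x:ℕ)-1) (by omega)]
      have e1 : (x:ℕ) - ((x:ℕ)-1) + (((x:ℕ)-1) - (x:ℕ)) = 1 := by omega
      rw [e1, Nat.mul_one]
      omega
    · rw [if_pos h, if_pos h, ih]
    · rw [if_neg (by omega), if_neg (by omega), if_neg (by omega), if_neg (by omega),
        dc_K x ((x:ℕ)+1) (by have := x.isLt; omega)]
      have e1 : (x:ℕ) - ((x:ℕ)+1) + (((x:ℕ)+1) - (x:ℕ)) = 1 := by omega
      rw [e1, Nat.mul_one]
      omega

/-- dc is 1-Lipschitz along edges -/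
lemma dc_lip : ∀ {n : ℕ} {u v : W n}, (G n).Adj u v → ∀ x : ℕ, x ≤ 3 →
    dc n u x ≤ dc n v x + 1 := by
  intro n
  induction n with
  | zero => intro u v h; exact absurd h (adj_zero u v)
  | succ n ih =>
    intro u v h x hx
    have h1 : (1:ℕ) ≤ 2^n := Nat.one_le_two_pow
    rcases adj_succ_iff.mp h with ⟨h0, ht⟩ | ⟨hadj, hK⟩
    · have h0v : (u 0 : ℕ) = (v 0 : ℕ) := congrArg Fin.val h0
      rw [dc_succ, dc_succ, h0v]
      rcases Nat.lt_trichotomy ((v 0 : ℕ)) x with hc | hc | hc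
      · rw [if_neg (by omega), if_pos hc, if_neg (by omega), if_pos hc]
        have := ih ht ((v 0 : ℕ)+1) (by omega)
        omega
      · rw [if_pos hc, if_pos hc]
        exact ih ht x hx
      · rw [if_neg (by omega), if_neg (by omega), if_neg (by omega), if_neg (by omega)]
        have := ih ht ((v 0 : ℕ)-1) (by have := (v 0).isLt; omega)
        omega
    · have htu : Fin.tail u = K (v 0) := funext fun j => (hK j).1
      have htv : Fin.tail v = K (u 0) := funext fun j => (hK j).2
      rw [dc_succ, dc_succ, htu, htv]
      rw [p4_adj] at hadj
      have hu3 : (u 0 : ℕ) ≤ 3 := by have := (u 0).isLt; omega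
      have hv3 : (v 0 : ℕ) ≤ 3 := by have := (v 0).isLt; omega
      have hpv : (u 0 : ℕ) = 0 ∨ (u 0 : ℕ) = 1 ∨ (u 0 : ℕ) = 2 ∨ (u 0 : ℕ) = 3 := by omega
      have hqv : (v 0 : ℕ) = 0 ∨ (v 0 : ℕ) = 1 ∨ (v 0 : ℕ) = 2 ∨ (v 0 : ℕ) = 3 := by omega
      have hxv : x = 0 ∨ x = 1 ∨ x = 2 ∨ x = 3 := by omega
      rcases hpv with hp | hp | hp | hp <;> rcases hqv with hq | hq | hq | hq <;>
        rcases hxv with rfl | rfl | rfl | rfl <;>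
        first
          | omega
          | (rw [hp, hq]
             norm_num
             first
               | omega
               | (rw [dc_K _ _ (by omega), dc_K _ _ (by omega), hp, hq]
                  norm_num
                  omega)
               | (rw [dc_K _ _ (by omega), hp, hq]
                  norm_num
                  omega))

end SierpP4
namespace SierpP4

/-- D is 1-Lipschitz in the second argument along edges -/
lemma D_lip : ∀ {n : ℕ} (u : W n) {v w : W n}, (G n).Adj v w →
    D n u v ≤ D n u w + 1 := by
  intro n
  induction n with
  | zero => intro u v w h; exact absurd h (adj_zero v w)
  | succ n ih =>
    intro u v w h
    have h1 : (1:ℕ) ≤ 2^n := Nat.one_le_two_pow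
    have hu3 : (u 0 : ℕ) ≤ 3 := by have := (u 0).isLt; omega
    rcases adj_succ_iff.mp h with ⟨h0, ht⟩ | ⟨hadj, hK⟩
    · -- inner edge
      have h0v : (v 0 : ℕ) = (w 0 : ℕ) := congrArg Fin.val h0
      rw [D_succ, D_succ, h0v]
      rcases Nat.lt_trichotomy ((u 0 : ℕ)) ((w 0 : ℕ)) with hc | hc | hc
      · rw [if_neg (by omega), if_pos hc, if_neg (by omega), if_pos hc]
        have := dc_lip ht ((w 0 : ℕ)-1) (by have := (w 0).isLt; omega)
        omega
      · rw [if_pos hc, if_pos hc]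
        exact ih _ ht
      · rw [if_neg (by omega), if_neg (by omega), if_neg (by omega), if_neg (by omega)]
        have := dc_lip ht ((w 0 : ℕ)+1) (by omega)
        omega
    · -- bridge edge
      have htv : Fin.tail v = K (w 0) := funext fun j => (hK j).1
      have htw : Fin.tail w = K (v 0) := funext fun j => (hK j).2
      rw [p4_adj] at hadj
      have hv3 : (v 0 : ℕ) ≤ 3 := by have := (v 0).isLt; omega
      have hw3 : (w 0 : ℕ) ≤ 3 := by have := (w 0).isLt; omega
      have hpv : (u 0 : ℕ) = 0 ∨ (u 0 : ℕ) = 1 ∨ (u 0 : ℕ) = 2 ∨ (u 0 : ℕ) = 3 := by omega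
      have hqv : (v 0 : ℕ) = 0 ∨ (v 0 : ℕ) = 1 ∨ (v 0 : ℕ) = 2 ∨ (v 0 : ℕ) = 3 := by omega
      have hrv : (w 0 : ℕ) = 0 ∨ (w 0 : ℕ) = 1 ∨ (w 0 : ℕ) = 2 ∨ (w 0 : ℕ) = 3 := by omega
      have hDv : D (n+1) u v =
        (if (u 0 : ℕ) = (v 0 : ℕ) then dc n (Fin.tail u) ((w 0 : ℕ))
         else if (u 0 : ℕ) < (v 0 : ℕ) then dc n (Fin.tail u) ((u 0 : ℕ)+1) + dc n (K (w 0)) ((v 0 : ℕ)-1) + ((v 0 : ℕ) - (u 0 : ℕ)) + ((v 0 : ℕ) - (u 0 : ℕ) - 1)*2*(2^n - 1)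
         else dc n (Fin.tail u) ((u 0 : ℕ)-1) + dc n (K (w 0)) ((v 0 : ℕ)+1) + ((u 0 : ℕ) - (v 0 : ℕ)) + ((u 0 : ℕ) - (v 0 : ℕ) - 1)*2*(2^n - 1)) := by
        rw [D_succ, htv]
        split_ifs with he hl
        · exact D_K (Fin.tail u) (w 0)
        · rfl
        · rfl
      have hDw : D (n+1) u w =
        (if (u 0 : ℕ) = (w 0 : ℕ) then dc n (Fin.tail u) ((v 0 : ℕ))
         else if (u 0 : ℕ) < (w 0 : ℕ) then dc n (Fin.tail u) ((u 0 : ℕ)+1) + dc n (K (v 0)) ((w 0 : ℕ)-1) + ((w 0 : ℕ) - (u 0 : ℕ)) + ((w 0 : ℕ) - (u 0 : ℕ) - 1)*2*(2^n - 1)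
         else dc n (Fin.tail u) ((u 0 : ℕ)-1) + dc n (K (v 0)) ((w 0 : ℕ)+1) + ((u 0 : ℕ) - (w 0 : ℕ)) + ((u 0 : ℕ) - (w 0 : ℕ) - 1)*2*(2^n - 1)) := by
        rw [D_succ, htw]
        split_ifs with he hl
        · exact D_K (Fin.tail u) (v 0)
        · rfl
        · rfl
      rw [hDv, hDw]
      rcases hpv with hp | hp | hp | hp <;> rcases hqv with hq | hq | hq | hq <;>
        rcases hrv with hr | hr | hr | hr <;>
        first
          | omega
          | (rw [hp, hq, hr]
             norm_num
             all_goals (repeat rw [dc_K _ _ (by omega)])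
             all_goals (try simp only [hq, hr])
             all_goals norm_num
             all_goals omega)

lemma D_lip' : ∀ {n : ℕ} {u v : W n} (w : W n), (G n).Adj u v →
    D n u w ≤ D n v w + 1 := by
  intro n u v w h
  rw [D_symm u w, D_symm v w]
  exact D_lip w h

/-- every walk is at least as long as D -/
lemma walk_ge_D {n : ℕ} {u v : W n} (p : (G n).Walk u v) : D n u v ≤ p.length := by
  induction p with
  | nil => simp [D_self]
  | @cons a b c h q ih =>
    rw [SimpleGraph.Walk.length_cons]
    have h2 := D_lip' c h
    omega

end SierpP4
def dt1 : Nat := 0x5320a441688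
def pt1 : Nat := 0x41900000000841a00000000000000000000061100000000000000000000021100000000021200000001840a000000000409000000000000000000000009000000000000000000010202000000000201000000000000
def order1 : List Nat := [0, 1, 2, 3]
def dt2 : Nat := 0xad2ed52d76d42525d4a56edb05acda94addb68b69b62b5b26d0a52ed52d65d41565d8a5acd884a4ba94b69b60b59b524ad2ed12d36d89564d814a5db14acba82acbb62b59b10b496ed52d36d16dadd895a5da25b5bb12ac9b02b6bb62b59b50
def pt2 : Nat := 0x7167a00000000000000000000000000000000167900000147167b00000000000000000000000000000003967a00000000000000000000000000000000000000000063967b00000000000000000000000000000000000000000007967200000000000000000000000000000000000000000000167100000000147100000123147300000000000000000003967200000003147200000000000000000000000000000063967300000043147300000000000000000000000000000000000000000000000000000000000000000000000000000000000000000143126b00000000126900000000000000000000000000000003126a00000002926a00000000000000000000000000000043126b00000022926b000000000000000000000000000000000000000000000000000000000000000000000000000000000000000000000000000000001061000000000000000000000000000000000000000000021062000000000000000000000000000000221063000000021063000000001e59000000001c59000000000000000000000000000000000000000000051c5a000000000000000000000000000000000e59000000c51c5b000000000000000000000000000000018e5a000000000000000000000000000000000000000001e59c53000000001c51000001a48c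53000000000000000000059c52000000000000000000048c52000000000000000000e59c53000000000c51000000a48c53000000000000000000000000000000010c52000000000000000000000000000000000000000001c50c4b000000001a49000000000000000000000000000000050c4a000000000000000000000000000000000000000000000c49000000000a49000000808a4b000000000000000000010c4a000000008a4a000000000000000000000000000000000000000000000000000000001841000000000000000000000000000000000000000000000000000000000000000000000000000000a0884300000000084100000000000000000000000000000000884200000000084200000007963a00000007163a00000000000000000000000000000000163900000147163b00000000000000000000000000000000000000000000000000000000000000000000000000000000063900000000000000000000000000000000000000000000000000000007143200000006923200000000000000000167143300000000143100000000123100000000000000000000000000000000000000000002923200000000000000000000000000000000043100000022923300000000000000000000000000000000000000000006922a00000000000000000000000000000143122b00000000122900000102022b00000000000000000003122a00000000000000000002022a00000000000000000043122b00000000022900000002022b000000000000000000000000000000000000000000061022000000000000000000000000000001228223000000001021000000000000000000000000000000028222000000000000000000000000000000000000000000000221000000000021000001e58e1b000001c58e1b000000000000000000000000000000058e1a000000000000000000000000000000000000000000000e19000000000000000000000000000000000000000000000000000000000000000000000000000000000000000000000000000001c50c13000001a48c13000000000000000000000000000000050c12000000048c12000000000000000000000000000000000c11000000a48c1300000000000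0000000000000000000000000000000000000000000000000000000000000000000000000000001a48a0b00000184080b000000000000000000000000000000048a0a00000004080a000000000000000000c48a0b000000000a0900000000080900000000000000000000000000000000000000000000080a000000000000000000000000000000000000000001840803000000000000000000000000000000000000000000040802000000000000000000000000000000a08803000000000801000000000000000000000000000000008802000000000000
def order2 : List Nat := [2, 6, 9, 10, 5, 13, 14, 1, 11, 4, 7, 15, 0, 8, 3, 12]
def dt3 : Nat := 0x12d56db6db6d36d76db6db6d56d96db6db6d76db6db6db6d82d4ad96db6d66d2ed76db6d8ad52d96db6daed76db6db6db45b55b6db6db4db5db6db6db55b65b2db6db5db6db6db6db68b6ab6db6db69b6bb6db6db6ab6cb6db6db6bb6db6db6d4ad12d96db6d2ed36d76db6d52d56d96db6d76d76db6db6daad82db2db6da6d66daedb6daad8adb2db6daedaedb6db6db55b45b25b6db4db4daddb6db55b15aa5b2db5db5daedb6db6ab68b6cb6db69b69b6bb6db6ab6ab6cb6db6bb6bb6db6db2d96d16db6db6d76d36db6db6d56d56d96db6d76d76db6db6db25a2db6db6dadda6db6db6daa5aadb2db6daedaedb6db6db65b45b6db6db5db4db6db6db55b15b65b6db5db5db6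db6db6cb68b6db6db6bb69b6db6db6ab6ab64b6db6bb6bb5db6db6db6d16db6db6db6d36db6db6d96d56db6db6d76d76db6db6db6da2db6db6db6da6db6db6db2daadb6db6daedaedb6db6db6db45b6db6db6db4db6db6db64b55b6db6db5db5db6db6db6db68b6db6db6db69b6db6db6cb6ab6db6db6bb6b2ed36db6db6d12d56d96db6d36d76db6db6d56d96db6db6da6d66db6db6d82d4ad92db6da6d6edb6db6daad92db6db6db4db4db6db6db45b55b25b6db4db5daedb6db55b65b2db6db69b69b6db6db68b6ab6cb6db69b6bb6db6db6ab6cb6db6d66d2ed76db6d4ad12d56db6d6ed36d76db6d92d56d96db6daeda6daedb6daad825aadb6daeda6daedb6db2daadb2db6db5db4daddb6db55b05a95b2db5dacda5daedb65b15aa5b2db6bb69b6bb6db6ab68b6ab6db6bb69b6bb6db6cb6ab6cb65aed76d36db6d92d56d16d96db6d36d36d76db6d56d56d96db6dadda6db6db25a95a25b2db6da5da6daedb6daa5aadb2db6db5db4db6db65b55b05b65b6db4dacdb5db6db55b15b65b6db6bb69b6db6cb6ab68b64b6db69b69b5bb6db6ab62b54b6db6db6d36db6db6d96d16db6db6d7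6d36db6db6d56d56db6db6db6da6db6db65b2da2db6db6daeda6db6db6daadaadb6db6db6db4db6db6db64b45b6db6db5bb4db6db6db54b55b6db6db6db69b6db6db6cb68b6db6db6bb69b6db6db6ab6252d56db6db6d36d76db6db6d16d96db6db6d36db6db6db6daad8adb6db6da6d6edb6db6da2d92db6db6da6db6db6db6db55b55b6db6db4db5db6db6db45b65b2db6db4db6db6db6db6ab6ab6db6db69b6bb6db6db68b6cb6db6db69b6db6db6d8ad52d56db6d6ed36d36db6d92d16d56d96db6d36d76db6db2daa5aadb6daeda5da6db6db2da25aadb2db6da6daedb6db65b55b15b6db5db4dacdb6db65b05a95b25b6db4daddb6db6cb6ab6ab6db6bb69b69b6db6cb68b6ab64b6db69b6bb5db2d96d56d96db6d76d36d76db6d56d16d56db6d76d36d76db65b15aa5b2db5dacda5daedb65a95a25aadb6dadda6daedb6db65b55b65b6db5db4db5db6db55b04b55b6db5db4db5db6db6cb6ab64b6db6bb69b5bb6db6ab60b52b6db6bb59b4bb6db6d96d56db6db6d76d36db6d96d56d16db6db6d36d36db6db65b2daadb6db5daeda6db6db25aada2db6db6da6da6db6db6db64b55b6db6db5bb4db6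db64b52b44b6db6db4bb4db6db6db6cb6ab6db6db6bb69b6db6cb6ab60b6db6db69b5976d76db6db6d56d96db6db6d36db6db6db6d16db6db6db6daedaedb6db6daad92db6db6da6db6db6db6da2db6db6db6db5db5db6db6db55b65b6db6db4db6db6db6db45b6db6db6db6bb6bb6db6db6ab6cb6db6db69b6db6db6db68b6db6db6daed76d76db6d92d56d56db6db6d36d76db6db6d16d96db6db6daedaedb6db2daa5aadb6db6da6daedb6db6da2db2db6db6db5db5db6db65b55b15b6db6db4daddb6db6db45b25b6db6db6bb6bb6db6cb6ab6ab6db6db69b6bb6db6db68b6cb65b6db6d76d76db6d96d56d56db6d76d36d36db6d96d16d56db6db5daedaedb65b15aa5aadb6dadda6da6db6db25a2daadb6db6db5db5db6db65b54b55b6db5db4bb4db6db65b44b55b6db6db6bb6bb6db6cb6ab62b6db6bb69b59b6db6cb60b52b6db6db6d76db6db6d96d56db6db6d76d36db6db6d56d16db6db6db6daedb6db65b2daadb6db6daeda6db6db6daada2db6db6db6bb5db6db6cb62b54b6db6bb59b4bb6db6cb52b44b6db6db6db6bb6db6db6cb6ab6db6db6bb69b6db6db6ab60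
def pt3 : Nat := 0x1f57ddffc0000000000000000000000000000001ddffa000000000000000000000000000000000000000000000000000000000000000000000000000000000000000000000000000000000000000000000000000000000000000000005ff90000000000000000000000000000000000000000057ddffb0000000000000000000000000000000000000000000000000000000000000000000000000000000000000000000000000000000000000000000000000000000000000000000fdffa0000000000000000000000000000000000000000dd7ddffc000000000000000000000000000000000000000000000000000000000000000000000000000000000000000000000000000000000000000000000000000000000000000001efdffb0000000000000000000000000000000000000000000000000000000000000000000000000000000000000000000000000000000000000000000000000000000000000000000000000000000000000000000000000000000000000001fdfdd7f40000000000000000000000000000000000000000001dd7f20000001d5df20000000000000000000000000001bcedd7f4000000000000000000000000000000000000000000000000000000000000000000000000000000000000000005fdd7f3000000005df10000000000000000000000000000000057f10000055d5df3000000000000000000000000000004edd7f30000000000000000000000000000000000000000000000000000000000000000000000000000000000000000fdfdd7f40000000f5df20000000000000000000000000000000dd7f20000d55d5df40000000000000000000000000000bcedd7f4000000000000000000000000000000000000000000000000000000000000000000000000000000000000000000000000000001cf5df30000000000000000000000000000016dd7f3000000000000000000000000000000000000000000000000000000000000000000000000000000000000000000000000000000000000000000000000000000000000000000000000000000000000000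0000000000000000000000000000000000000000000000000001cdbea000000000000000000000000000000000000000000000000000000000000000000000000000000000000000000000000000000000000000000000000000000000000000000005be90000000000000000000000000000000000000000053cdbeb0000000000000000000000000000000000000000000000000000000000000000000000000000000000000000000000000000000000000000000000000000000000000000000edbea0000000000000000000000000000000000000000cd3cdbec0000000000000000000000000000b53cdbec000000000000000000000000000000000000000000000000000000000000000000000000000000000000000000000000000001aedbeb0000000000000000000000000000000000000000000000000000000000000000000000000000000000000000000000000000000000000000000000000000000000000000000000000000000000000000000000000000000000000000000000000000000000000000000000000000000000000000000000000000001c59e20000000000000000000000000000000000000000000000000000000000000000000000000000000000000000000000000000000000000000000000000000000000000000000059e10000000000000000000000000000000000000000051c59e30000000000000000000000000000000000000000000000000000000000000000000000000000000000000000000000000000000000000000000000000000000000000000000e59e20000000000000000000000000000000000000000c51c59e40000000000000000000000000000000000000000000000000000000000000000000000000000000000000000000000000000000000000000000000000000000000000000018e59e30000000000000000000000000000000000000000000000000000000000000000000000000000000000000000000000000000000000000000000000000000000000000000000000000000001fdfda0000001f57da0000000000000000000000000000000000000001d5df57dc0000000000000000000000000001bcedd7dc0000000000000000000000000000000000000000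00000000000000000000000000000000000000000000000000005fd9000005df57db0000000000000000000000000000000057d9000000000000000000000000000000000000000004edd7db0000000000000000000000000000000000000000000000000000000000000000000000000000000000000000000fdfda0000f5df57dc0000000000000000000000000000000dd7da0000000000000000000000000000000000000000bcedd7dc000000000000000000000000000000000000000000000000000000000000000000000000000000000000000001efdfdb0000000000000000000000000000000000000000016dd7db0000000000000000000000000000000000000000000000000000000000000000000000000000000000000000000000000000000000000000000000000000000000000000000000000000001f5dd20000000000000000000000000001dd7f5dd40000000000000000000000000000000000000000000000000001b4cd55d4000000000000000000000000000000000000000000000000000000000000000000000000000000000000000000005dd10000000000000000000000000000057f5dd30000000055d1000000000000000000000000000000000000000004cd55d30000000000000000000000000000000000000000000000000000000000000000000000000000000000000000000f5dd20000000000000000000000000000dd7f5dd40000000d55d20000000000000000000000000000000000000000b4cd55d4000000000000000000000000000000000000000000000000000000000000000000000000000000000000000001cf5dd30000000000000000000000000000000000000000014d55d30000000000000000000000000000000000000000000000000000000000000000000000000000000000000000000000000000000000000000000000000000000000000000000000000000001edbca0000000000000000000000000000000000000000000000000000000000000000000000000001b4cb53cc0001acacd3cc0000000000000000000000000000000000000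00000000000000000000000000000000000000000000000000000005bc90000000000000000000000000000000000000000000053c9000000000000000000000000000004cb53cb000004acd3cb0000000000000000000000000000000000000000000000000000000000000000000000000000000000000000000edbca0000000000000000000000000000d4cb53cc0000000cd3ca0000000000000000000000000000000b53ca0000acacd3cc000000000000000000000000000090cb53cc000000000000000000000000000000000000000000000000000001aedbcb0000000000000000000000000000000000000000012cd3cb000000000000000000000000000000cb53cb0000000000000000000000000000000000000000000000000000000000000000000000000000000000000000000000000000000000000000001e59c20000000000000000000000000000000000000000000000000000000000000000000000000000000000000001a48c51c40000000000000000000000000000000000000000000000000000000000000000000000000000000000000000000059c10000000000000000000000000000000000000000000051c10000000000000000000000000000000000000000048c51c30000000000000000000000000000000000000000000000000000000000000000000000000000000000000000000e59c20000000000000000000000000000000000000000000c51c20000000000000000000000000000000000000000a48c51c40000000000000000000000000000000000000000000000000000000000000000000000000000000000000000018e59c30000000000000000000000000000000000000000010c51c30000000000000000000000000000000000000000000000000000000000000000000000000000000000000000000000000000000000000001f56dcfbc0000000000000000000000000001dd6dcfbc0000000000000000000000000000000000000000000000000000000000000000000000000000000000000000000000000000000000000000000000000000000000000000000000000000000000000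000000000000000000000000000056dcfbb000000000000000000000000000000000000000000004fb90000000000000000000000000000000000000000000000000000000000000000000000000000000000000000000000000000000000000000000000000000000000000000000dcfba0000000000000000000000000000000000000000000bcfba000000000000000000000000000000000000000098ebcfbc0000000000000000000000000000000000000000000000000000000000000000000000000000000000000000016dcfbb000000000000000000000000000000000000000000ebcfbb0000000000000000000000000000000000000000000000000000000000000000000000000000000000000000000000000000000000000000000000000000000000000000000000000001d54d4db40001cd2b4db40000000000000000000000000000000000000000000000000000000000000000000000000000000000000000000000000000000000000000000000000000000000000000000000000000000000000000000000000000054d4db30000052b4db3000000000000000000000000000000004db10000000000000000000000000000000000000000000000000000000000000000000000000000000000000000000000000000000000000000000000000000000000000000000d4db20000cd2b4db40000000000000000000000000000000b4db2000000000000000000000000000000000000000090cb4db40000000000000000000000000000000000000000000000000000000000000000000000000000000000000000014d4db3000000000000000000000000000000000000000000cb4db30000000000000000000000000000000000000000000000000000000000000000000000000000000000000000000000000000000000000000000000000000000000000000000000000001cd2ccbac0000000000000000000000000000000000000000000000000000000000000000000000000000000000000000000000000000000000000000000000000000000000000000000000000000000000000000000000000000000000000000052ccbab0000000000000000000000000000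00000000000000004ba90000000000000000000000000000000000000000000000000000000000000000000000000000000000000000000000000000000000000000000000000000000000000000000ccbaa0000000000000000000000000000b52ccbac0000000acbaa000000000000000000000000000000000000000088aacbac0000000000000000000000000000000000000000000000000000000000000000000000000000000000000000012ccbab000000000000000000000000000000000000000000aacbab0000000000000000000000000000000000000000000000000000000000000000000000000000000000000000000000000000000000000000000000000000000000000000000000000001c50c49a40000000000000000000000000000000000000000000000000000000000000000000000000000000000000000000000000000000000000000000000000000000000000000000000000000000000000000000000000000000000000000050c49a30000000000000000000000000000000000000000000049a10000000000000000000000000000000000000000000000000000000000000000000000000000000000000000000000000000000000000000000000000000000000000000000c49a20000000000000000000000000000000000000000000a49a20000000000000000000000000000882a49a40000808a49a40000000000000000000000000000000000000000000000000000000000000000000000000000000000000000010c49a30000000000000000000000000000000000000000008a49a30000000000000000000000000000002a49a3000000000000000000000000000000000000000000000000000000000000000000000000000000000000000000000000000000000000000000000000000000000000000000000000000000000000000000000000000000000000000000000000000000000000000000000000000000000000000000000000000000000000000000000000000000000000000000000000000000000000000000000000000000000000000000000000000000000000000000004799000000000000000000000000000000000000000000000000000000000000000000000000000000000000000000000000000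0000000000000000000000000000000000000b8e9c79c00000000000000000000000000000000000000000009c79a000000000000000000000000000000000000000000000000000000000000000000000000000000000000000000000000000000000000000000000000000000000000000000e9c79b00000000000000000000000000000000000000000069c79b0000000000000000000000000000000000000000000000000000000000000000000000000000000000000000000000000000000000000000000000000000000000000000000000000000000000000000000000000000000000000000000000000000000000000000000000000000000000000000000000000000000000000000000000000000000000000000000000000000000000000000000000000000000000000000000000000000000000000000000000000000000000000000000000000000000045910000000000000000000000000000000000000000000000000000000000000000000000000000000000000000000000000000000000000000000000000000000000000000b0c94594000000000000000000000000000000000000000000094592000000000000000000000000000000000000000000000000000000000000000000000000000000000000000000000000000000000000000000000000000000000000000000c945930000000000000000000000000000000000000000004945930000000000000000000000000000000000000000000000000000000000000000000000000000000000000000000000000000000000000000000000000000000000000000000000000000000000000000000000000000000000000000000000000000000000000000000000000000000000000000000000000000000000000000000000000000000000000000000000000000000000000000000000000000000000000000000000000000000000000000000000000000000000000000000000000000000043890000000000000000000000000000000000000000000000000000000000000000000000000000000000000000000000000000000000000000000000000000000000000000a8a8c38c0000a028c38c00000000000000000000000000000008c38a0000000000000000000000000000000000000000000000000000000000000000000000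00000000000000000000000000000000000000000000000000000000000000000000a8c38b00000000000000000000000000000000000000000028c38b0000000000000000000000000000000000000000000000000000000000000000000000000000000000000000000000000000000000000000000000000000000000000000000000000000000000000000000000000000000000000000000000000000000000000000000000000000000000000000000000000000000000000000000000000000000000000000000000000000000000000000000000000000000000000000000000000000000000000000000000000000000000000000000000000000000041810000000000000000000000000000000000000000000000000000000000000000000000000000000000000000000000000000000000000000000000000000000000000000a0884184000000000000000000000000000000000000000000084182000000000000000000000000000000000000000000000000000000000000000000000000000000000000000000000000000000000000000000000000000000000000000000884183000000000000000000000000000000000000000000084183000000007f79000007d5f77b000000000000000000000000000000007779000000000000000000000000000000000000000000000000000000000000000000000000000000000000000000000000000000000000000000000000000000000000000000000000000177d5f77c00000000000000000000000000000015f77a00000000000000000000000000000000000000013b75f77c000000000000000000000000000000000000000000000000000000000000000000000000000000000000000000003f7900000000000000000000000000000000000000000375f77b00000000000000000000000000000000000000000000000000000000000000000000000000000000000000000000000000000000000000000000000000000000000000000007bf7a00000000000000000000000000000000000000005b75f77c000000000000000000000000000000000000000000000000000000000000000000000000000000000000000000000000000000000000000000000000000000000000000000000000000000007d7100000000000000000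000000000000775fd7300000000757100000000000000000000000000000000000000000000000000000000000000000000000000000000000000000000000000000000000000000000000000017f75fd7400000000000000000000000000000000000000000015fd7200000015757200000000000000000000000000013b75fd74000133557574000000000000000000000000000000000000000000000000000000000000000000000000000000000000000000003d7100000000000000000000000000000375fd73000003557573000000000000000000000000000000000000000000000000000000000000000000000000000000000000000000000000000000000000000000000000000000000000000000073d7200000000000000000000000000005b75fd74000053557574000000000000000000000000000000000000000000000000000000000000000000000000000000000000000000000000000000000000000000000000000000000000000000000000000000007b6900000000000000000000000000000000000000000000736900000000000000000000000000000000000000000000000000000000000000000000000000000000000000000000000000000000000000000000000000000000000000000000000000000000000000000000000000000000000000000014f36a000000000000000000000000000132d4f36c00012b34f36c000000000000000000000000000000000000000000000000000000000000000000000000000000000000000000003b6900000000000000000000000000000000000000000334f36b000000000000000000000000000002d4f36b00000000000000000000000000000000000000000000000000000000000000000000000000000000000000000000000000000006bb6a00000000000000000000000000000000000000004b34f36c000000000000000000000000000032d4f36c0000000000000000000000000000000000000000000000000000000000000000000000000000000000000000000000000000000000000000000079610000000000000000000000000000000000000000000071610000000000000000000000000000000000000000000000000000000000000000000000000000000000000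00000000000000000000000000000000000000000000000000000000000000000000000000000000000000000000000000000147162000000000000000000000000000000000000000123147164000000000000000000000000000000000000000000000000000000000000000000000000000000000000000000003961000000000000000000000000000000000000000003147163000000000000000000000000000000000000000000000000000000000000000000000000000000000000000000000000000000000000000000000000000000000000000000063962000000000000000000000000000000000000000043147164000000000000000000000000000000000000000000000000000000000000000000000000000000000000000000000000000007f7f75b000000007d59000000000000000000000000000000007759000007577d5b000000000000000000000000000006f3b75b00000000000000000000000000000000000000000000000000000000000000000000000000000000000000000017f75a000000177d5a000000000000000000000000000000000000000157577d5c00000000000000000000000000000013b75a000000000000000000000000000000000000000000000000000000000000000000000000000000000000000003f7f75b000003d77d5b000000000000000000000000000000003759000000000000000000000000000000000000000002f3b75b00000000000000000000000000000000000000000000000000000000000000000000000000000000000000007bf7f75c000073d77d5c00000000000000000000000000000005b75a00000000000000000000000000000000000000003af3b75c000000000000000000000000000000000000000000000000000000000000000000000000000000000000000000000000000007d77553000000000000000000000000000000000000000000007551000000000000000000000000000000000000000006d3355300000000000000000000000000000000000000000000000000000000000000000000000000000000000000000017755200000000000000000000000000015fd7755400000000000000014ad3355400000000000000000000000000000013355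2000000000000000000000000000000000000000000000000000000000000000000000000000000000000000003d77553000000000000000000000000000000000000000000003551000000000000000000000000000000000000000002d33553000000000000000000000000000000000000000000000000000000000000000000000000000000000000000073d77554000000000000000000000000000000000000000000053552000000000000000000000000000000000000000032d33554000000000000000000000000000000000000000000000000000000000000000000000000000000000000000000000000000007b6f34b000000000000000000000000000000000000000000007349000000000000000000000000000006d32d4b000006b2b34b00000000000000000000000000000000000000000000000000000000000000000000000000000000000000000016f34a000000000000000000000000000153532d4c000000000000000000000000000000000000000000132d4a00000012b34a000000000000000000000000000112432d4c000000000000000000000000000000000000000000000000000003b6f34b000000000000000000000000000003532d4b000000003349000000000000000000000000000000002d49000002b2b34b000000000000000000000000000002432d4b00000000000000000000000000000000000000000000000000006bb6f34c000000000000000000000000000053532d4c00000004b34a000000000000000000000000000000032d4a00002ab2b34c000000000000000000000000000012432d4c0000000000000000000000000000000000000000000000000000000000000000079671430000000000000000000000000000000000000000000071410000000000000000000000000000000000000000069231430000000000000000000000000000000000000000000000000000000000000000000000000000000000000000001671420000000000000000000000000000000000000000000000000000000000000000000000000000000000000000001231420000000000000000000000000000000000000000000000000000000000000000000000000000000000000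0000396714300000000000000000000000000000000000000000000314100000000000000000000000000000000000000000292314300000000000000000000000000000000000000000000000000000000000000000000000000000000000000006396714400000000000000000000000000000000000000000004314200000000000000000000000000000000000000002292314400000000000000000000000000000a923144000000000000000000000000000007d5b73b00000000000000000000000000000775b73b000000000000000000000000000000000000000000006f3900000000000000000000000000000000000000000000000000000000000000000000000000000000000000017f75b73c000177d5b73c00000000000000000000000000000015b73a00000000000000000000000000000000000000000000000000000000000000000000000000000000000000011a63af3c000000000000000000000000000000000000000000000000000000000000000000000000000000000000000000003739000000000000000000000000000000000000000000002f3900000000000000000000000000000000000000000263af3b00000000000000000000000000000000000000000000000000000000000000000000000000000000000000000005b73a00000000000000000000000000000000000000000003af3a00000000000000000000000000000000000000001a63af3c00000000000000000000000000000000000000000000000000000000000000000000000000000000000000000000000000000755353300000734ad33000000000000000000000000000000006d3100000000000000000000000000000000000000000000000000000000000000000000000000000000000000017755353400016f34ad3400000000000000000000000000000015353200000014ad3200000000000000000000000000000000000000012b34ad34000000000000000000000000000112432d3400000000000000000000000000000000000000000000000000000000000000000000000000000000000000000000353100000334ad33000000000000000000000000000000002d31000000000000000000000000000000000000000002432d3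300000000000000000000000000000000000000000000000000000000000000000000000000000000000000000005353200004b34ad34000000000000000000000000000000032d32000000000000000000000000000000000000000012432d3400000000000000000000000000000000000000000000000000000000000000000000000000000000000000000000000000000734b32b000000000000000000000000000000000000000000006b2900000000000000000000000000000000000000000000000000000000000000000000000000000000000000016f34b32c00000000000000000000000000000000000000000014b32a000000000000000000000000000132d4b32c00000000000000000000000000000000000000000000000000010a22ab2c000000000000000000000000000000000000000000000000000000000000000000000000000000000000000000003329000000000000000000000000000002d4b32b000000002b2900000000000000000000000000000000000000000222ab2b00000000000000000000000000000000000000000000000000000000000000000000000000000000000000000004b32a000000000000000000000000000032d4b32c00000002ab2a00000000000000000000000000000000000000000a22ab2c00000000000000000000000000000000000000000000000000000000000000000000000000000000000000000000000000000714312300000000000000000000000000000000000000000000692100000000000000000000000000000000000000000000000000000000000000000000000000000000000000016714312400000000000000000000000000000000000000000014312200000000000000000000000000000000000000000000000000000000000000000000000000010a20a92400010202292400000000000000000000000000000000000000000000000000000000000000000000000000000000000000000000312100000000000000000000000000000000000000000000292100000000000000000000000000000220a9230000020229230000000000000000000000000000000000000000000000000000000000000000000000000000000000000000000431220000000000000000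0000000000002a20a92400000002292200000000000000000000000000000000a92200000202292400000000000000000000000000000000000000000000000000000000000000000000000000000000000000000000000000000000000000000000000000000000000000000000000000000000671900000000000000000000000000000000000000000000000000000000000000000000000000000000000000000000000000000000000000000000000000000000000000013ae3a71c000000000000000000000000000000000000000000000000000000000000000000000000000000000000000000000000000000000000000000000000000000000000000000000000000000000000000000000000000000000000000002e3a71b00000000000000000000000000000000000000000000271900000000000000000000000000000000000000000000000000000000000000000000000000000000000000000000000000000000000000000000000000000000000000000003a71a00000000000000000000000000000000000000000001a71a00000000000000000000000000000000000000000000000000000000000000000000000000000000000000000000000000000000000000000000000000000000000000000000000000000000000000000000000000000000000000000000000000000000651100000000000000000000000000000000000000000000000000000000000000000000000000000000000000000000000000014ac32514000000000000000000000000000132c32514000000000000000000000000000000000000000000000000000000000000000000000000000000000000000000000000000000000000000000000000000000000000000000000000000000000000000000000000000000000000000002c3251300000000000000000000000000000000000000000000251100000000000000000000000000000000000000000000000000000000000000000000000000000000000000000000000000000000000000000000000000000000000000000003251200000000000000000000000000000000000000000001251200000000000000000000000000000000000000000000000000000000000000000000000000000000000000000000000000000000000000000000000000000000000000000000000000000000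000000000000000000000000000000000000000000000000630900000000000000000000000000000000000000000000000000000000000000000000000000000000000000000000000000000000000000000000000000000000000000012aa2a30c00012280a30c000000000000000000000000000000000000000000000000000000000000000000000000000000000000000000000000000000000000000000000000000000000000000000000000000000000000000000000000000002a2a30b00000280a30b00000000000000000000000000000000230900000000000000000000000000000000000000000000000000000000000000000000000000000000000000000000000000000000000000000000000000000000000000000002a30a00002280a30c00000000000000000000000000000000a30a00000000000000000000000000000000000000000000000000000000000000000000000000000000000000000000000000000000000000000000000000000000000000000000000000000000000000000000000000000000000000000000000000000000610100000000000000000000000000000000000000000000000000000000000000000000000000000000000000000000000000000000000000000000000000000000000000012282210400000000000000000000000000000000000000000000000000000000000000000000000000000000000000000000000000000000000000000000000000000000000000000000000000000000000000000000000000000000000000000282210300000000000000000000000000000000000000000000210100000000000000000000000000000000000000000000000000000000000000000000000000000000000000000000000000000000000000000000000000000000000000000002210200000000000000000000000000000a8221040000000021020000001fdefa0001f57ddefc0000000000000000000000000000001ddefa000000000000000000000000000000000000000000000000000000000000000000000000000000000000000000000000000000000000000000000000000000000000000000005ef90000000000000000000000000000000000000000057ddefb0000000000000000000000000000000000000000000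000000000000000000000000000000000000000000000000000000000000000000000000000000000000000000000000000000000000000000000000000000000000000000000dd7ddefc000000000000000000000000000000000000000000000000000000000000000000000000000000000000000000000000000000000000000000000000000000000000000000001ef90000000000000000000000000000000000000000000000000000000000000000000000000000000000000000000000000000000000000000000000000000000000000000000000000000000000000000000000000000000000000000000000000000001f5cf20000000000000000000000000001dd7f5cf40000001d5cf2000000000000000000000000000000000000000000000000000000000000000000000000000000000000000000000000000000000000000000000000000000000000000000005cf10000000000000000000000000000057f5cf30000055d5cf30000000000000000000000000000000000000000000000000000000000000000000000000000000000000000000000000000000000000000000000000000000000000000000000000000000000000000000000000000dd7f5cf40000d55d5cf4000000000000000000000000000000000000000000000000000000000000000000000000000000000000000000000000000000000000000000000000000000000000000000001cf10000000000000000000000000000000000000000000000000000000000000000000000000000000000000000000000000000000000000000000000000000000000000000000000000000000000000000000000000000000000000000000000000000001edaea0000000000000000000000000000000000000000001cdaea000000000000000000000000000000000000000000000000000000000000000000000000000000000000000000000000000000000000000000000000000000000000000000005ae90000000000000000000000000000000000000000053cdaeb0000000000000000000000000000000000000000000000000000000000000000000000000000000000000000000000000000000000000000000000000000000000000000000000000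000000000000000000000000000000000000000cd3cdaec0000000000000000000000000000b53cdaec000000000000000000000000000000000000000000000000000000000000000000000000000000000000000000000000000000001ae90000000000000000000000000000000000000000000000000000000000000000000000000000000000000000000000000000000000000000000000000000000000000000000000000000000000000000000000000000000000000000000000000000001e58e20000000000000000000000000000000000000000001c58e20000000000000000000000000000000000000000000000000000000000000000000000000000000000000000000000000000000000000000000000000000000000000000000058e10000000000000000000000000000000000000000051c58e30000000000000000000000000000000000000000000000000000000000000000000000000000000000000000000000000000000000000000000000000000000000000000000000000000000000000000000000000000000000000000c51c58e40000000000000000000000000000000000000000000000000000000000000000000000000000000000000000000000000000000000000000000000000000000000000000000018e10000000000000000000000000000000000000000000000000000000000000000000000000000000000000000000000000000000000000000000000000000000000000000000000000001fdfdd6dc0000001f56da0000000000000000000000000000001dd6da0001d5df56dc0000000000000000000000000000001bceda000000000000000000000000000000000000000000000000000000000000000000000000000000000000000005fdd6db000005df56db0000000000000000000000000000000056d9000000000000000000000000000000000000000000004ed90000000000000000000000000000000000000000000000000000000000000000000000000000000000000000fdfdd6dc0000f5df56dc0000000000000000000000000000000000000000000000000000000000000000000000000000000bceda0000000000000000000000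00000000000000000098ebcedc0000000000000000000000000000000000000000000000000000000000000000000000000000000000000000000016d9000000000000000000000000000000000000000000ebcedb0000000000000000000000000000000000000000000000000000000000000000000000000000000000000000000000000001f5dd54d40000000000000000000000000000000000000000001d54d20001cd2b4cd40000000000000000000000000000001b4cd2000000000000000000000000000000000000000000000000000000000000000000000000000000000000000005dd54d30000000000000000000000000000000000000000000054d10000052b4cd3000000000000000000000000000000004cd10000000000000000000000000000000000000000000000000000000000000000000000000000000000000000f5dd54d40000000000000000000000000000000000000000000000000000cd2b4cd40000000000000000000000000000000b4cd2000000000000000000000000000000000000000090cb4cd40000000000000000000000000000000000000000000000000000000000000000000000000000000000000000000014d1000000000000000000000000000000000000000000cb4cd30000000000000000000000000000000000000000000000000000000000000000000000000000000000000000000000000001edbcd2cc0000000000000000000000000000000000000000001cd2ca0000000000000000000000000001b4cb52cc0000001acaca000000000000000000000000000000000000000000000000000000000000000000000000000000000000000005bcd2cb0000000000000000000000000000000000000000000052c9000000000000000000000000000004cb52cb000000004ac90000000000000000000000000000000000000000000000000000000000000000000000000000000000000000edbcd2cc0000000000000000000000000000d4cb52cc0000000000000000000000000000000000000000000b52ca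0000000acaca000000000000000000000000000090cb52cc000088aacacc0000000000000000000000000000000000000000000000000000000000000000000000000000000000000000000012c9000000000000000000000000000000cb52cb000000aacacb0000000000000000000000000000000000000000000000000000000000000000000000000000000000000000000000000001e59c50c40000000000000000000000000000000000000000001c50c20000000000000000000000000000000000000000001a48c20000000000000000000000000000000000000000000000000000000000000000000000000000000000000000059c50c30000000000000000000000000000000000000000000050c10000000000000000000000000000000000000000000048c10000000000000000000000000000000000000000000000000000000000000000000000000000000000000000e59c50c40000000000000000000000000000000000000000000000000000000000000000000000000000000000000000000a48c20000000000000000000000000000882a48c40000808a48c40000000000000000000000000000000000000000000000000000000000000000000000000000000000000000000010c10000000000000000000000000000000000000000008a48c30000000000000000000000000000002a48c30000000000000000000000000001f56dcebc0000000000000000000000000001dd6dcebc0000000000000000000000000000000000000000001bceba00000000000000000000000000000000000000019c698ebc0000000000000000000000000000000000000000000000000000000000000000000000000000000000000000056dcebb000000000000000000000000000000000000000000004eb9000000000000000000000000000000000000000004698ebb0000000000000000000000000000000000000000000000000000000000000000000000000000000000000000000dceba000000000000000000000000000000000000000000000000000000000000000000000000000000000000000000098eba0000000000000000000000000000000000000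000000000000000000000000000000000000000000000000000016dcebb000000000000000000000000000000000000000000000eb9000000000000000000000000000000000000000000698ebb0000000000000000000000000000000000000000000000000000000000000001edbcd2b40000000000000000000000000001d54d4cb40000001cd2b20000000000000000000000000000001b4cb20001acacd2b4000000000000000000000000000194490cb4000000000000000000000000000000000000000000000000000005bcd2b30000000000000000000000000000054d4cb30000000052b1000000000000000000000000000000004cb1000004acd2b3000000000000000000000000000004490cb30000000000000000000000000000000000000000000000000000edbcd2b40000000000000000000000000000000d4cb20000000cd2b20000000000000000000000000000000000000000acacd2b4000000000000000000000000000000090cb20000000000000000000000000000000000000000000000000000000000000000000000000000000000000000014d4cb30000012cd2b3000000000000000000000000000000000cb1000000000000000000000000000000000000000000490cb30000000000000000000000000000000000000000000000000000000000000000000000000000000000000000000000000001cd2ccaac0000000000000000000000000000000000000000001acaaa00000000000000000000000000000000000000018c288aac0000000000000000000000000000000000000000000000000000000000000000000000000000000000000000052ccaab000000000000000000000000000000000000000000004aa9000000000000000000000000000000000000000004288aab0000000000000000000000000000000000000000000000000000000000000000000000000000000000000000000ccaaa0000000000000000000000000000b52ccaac0000000000000000a0288aac000000000000000000000000000000088a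aa0000000000000000000000000000000000000000000000000000000000000000000000000000000000000000012ccaab000000000000000000000000000000000000000000000aa9000000000000000000000000000000000000000000288aab0000000000000000000000000000000000000000000000000000000000000000000000000000000000000000000000000001c50c48a40000000000000000000000000000000000000000001a48a200000000000000000000000000018c2882a40001840808a40000000000000000000000000000000000000000000000000000000000000000000000000000000000000000050c48a30000000000000000000000000000000000000000000048a10000000000000000000000000000042882a30000040808a30000000000000000000000000000000000000000000000000000000000000000000000000000000000000000000c48a20000000000000000000000000000a8a882a40000000000000000000000000000000000000000000882a20000000808a20000000000000000000000000000000000000000000000000000000000000000000000000000000000000000010c48a3000000000000000000000000000000a882a30000000008a10000000000000000000000000000000002a10000000808a30000000000000000000000000000000000000000000000000000000000000000000000000000000000000000000000000001bceb8e9c00000000000000000000000000000000000000000019c69a000000000000000000000000000000000000000000000000000000000000000000000000000000000000000000000000000000000000000000000000000000000000000004eb8e9b0000000000000000000000000000000000000000000046990000000000000000000000000000000000000000000000000000000000000000000000000000000000000000dceb8e9c0000000000000000000000000000000000000000000b8e9a0000000000000000000000000000000000000000000000000000000000000000000000000000000000000000000000000000000000000000000000000000000000000000000000000000000000000000000000000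00000000000000000000e990000000000000000000000000000000000000000000006990000000000000000000000000000000000000000000000000000000000000000000000000000000000000000000000000000000000000001cd2b0c940000000000000000000000000001b4cb0c940000000000000000000000000000000000000000001944920000000000000000000000000000000000000000000000000000000000000000000000000000000000000000000000000000052b0c93000000000000000000000000000004cb0c930000000000000000000000000000000000000000000044910000000000000000000000000000000000000000000000000000000000000000000000000000000000000000d4cb0c940000cd2b0c940000000000000000000000000000000b0c92000000000000000000000000000000000000000000000000000000000000000000000000000000000000000000000000000000000000000000000000000000000000000000000000000000000000000000000000000000000000000000000c910000000000000000000000000000000000000000000004910000000000000000000000000000000000000000000000000000000000000000000000000000000000000000000000000000000000000000000000000000000000000000000000000001acaa8a8c0001a48a028c00000000000000000000000000000018c28a000000000000000000000000000000000000000000000000000000000000000000000000000000000000000000000000000000000000000000000000000000000000000004aa8a8b0000048a028b0000000000000000000000000000000042890000000000000000000000000000000000000000000000000000000000000000000000000000000000000000ccaa8a8c0000c48a028c0000000000000000000000000000000a8a8a0000000a028a0000000000000000000000000000000000000000808a028c000000000000000000000000000000000000000000000000000000000000000000000000000000000000000000000000000000000000000000000000000000000a890000008a028b0000000000000000000000000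000000002890000000000000000000000000000000000000000000000000000000000000000000000000000000000000000000000000000000000000000000000000000000000000000000000000001a48a08840000000000000000000000000000000000000000001840820000000000000000000000000000000000000000000000000000000000000000000000000000000000000000000000000000000000000000000000000000000000000000048a08830000000000000000000000000000000000000000000040810000000000000000000000000000000000000000000000000000000000000000000000000000000000000000c48a08840000000000000000000000000000000000000000000a08820000000000000000000000000000882a08840000000000000000000000000000000000000000000000000000000000000000000000000000000000000000000000000000000000000000000000000000000000000000000000000000000008810000000000000000000000000000002a0883000000000081000007f7be7b00000000000000000000000000000000000000000777be7b00000000000000000000000000000000000000000000000000000000000000000000000000000000000000000000000000000000000000000000000000000000000000000017be7a00000000000000000000000000000000000000015f77be7c000000000000000000000000000000000000000000000000000000000000000000000000000000000000000000000000000000000000000000000000000000000000000000003e79000000000000000000000000000000000000000000000000000000000000000000000000000000000000000000000000000000000000000000000000000000000000000000000000000000000000000000000000000000000000000000000000000000000000000000000000000000000000000000000000000000000000000000000000000000000000000000000000000000000000000000000000000000000000000000000000000000000000000000000000000000000000000000000000000007d73c73000000000000000000000000000000000000000007573c7300000000000000000000000000000000000000000000000000000000000000000000000000000000000000000000000000000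0000000000000000000000000000000000000173c7200000000000000000000000000015fd73c74000157573c74000000000000000000000000000000000000000000000000000000000000000000000000000000000000000000000000000000000000000000000000000000000000000000003c71000000000000000000000000000000000000000000000000000000000000000000000000000000000000000000000000000000000000000000000000000000000000000000000000000000000000000000000000000000000000000000000000000000000000000000000000000000000000000000000000000000000000000000000000000000000000000000000000000000000000000000000000000000000000000000000000000000000000000000000000000000000000000000000000000007b6ba6b00000000000000000000000000000000000000000736ba6b00000000000000000000000000000000000000000000000000000000000000000000000000000000000000000000000000000000000000000000000000000000000000000016ba6a00000000000000000000000000000000000000014f36ba6c000000000000000000000000000000000000000000000000000000000000000000000000000000000000000000000000000000000000000000000000000000000000000000003a6900000000000000000000000000000000000000000000000000000000000000000000000000000000000000000000000000000000000000000000000000000000000000000000000000000000000000000000000000000000000000000000000000000000000000000000000000000000000000000000000000000000000000000000000000000000000000000000000000000000000000000000000000000000000000000000000000000000000000000000000000000000000000000000000000000796386300000000000000000000000000000000000000000716386300000000000000000000000000000000000000000000000000000000000000000000000000000000000000000000000000000000000000000000000000000000000000000016386200000000000000000000000000000000000000014716386400000000000000000000000000000000000000000000000000000000000000000000000000000000000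0000000000000000000000000000000000000000000000000000000003861000000000000000000000000000000000000000000000000000000000000000000000000000000000000000000000000000000000000000000000000000000000000000000000000000000000000000000000000000000000000000000000000000000000000000000000000000000000000000000000000000000000000000000000000000000000000000000000000000000000000000000000000000000000000000000000000000000000000000007d5b65b00000000000000000000000000000775b65b000000000000000000000000000000000000000006f3b65b00000000000000000000000000000000000000000000000000000000000000000000000000000000000000017f75b65c000177d5b65c00000000000000000000000000000015b65a00000000000000000000000000000000000000000013b65a000000000000000000000000000000000000000000000000000000000000000000000000000000000000000000000000000000000000000000000000000000000000000000003659000000000000000000000000000000000000000002f3b65b00000000000000000000000000000000000000000000000000000000000000000000000000000000000000000000000000000000000000000000000000000000000000000000000000000000000000000000000000000000000000003af3b65c000000000000000000000000000000000000000000000000000000000000000000000000000000000000000000000000000000000000000000000000000000000000000000000000000007553453000000000000000000000000000000000000000006d3345300000000000000000000000000000000000000000000000000000000000000000000000000000000000000017755345400000000000000000000000000000000000000000015345200014ad33454000000000000000000000000000000133452000000000000000000000000000000000000000000000000000000000000000000000000000000000000000000000000000000000000000000000000000000000000000000003451000000000000000000000000000000000000000002d3345300000000000000000000000000000000000000000000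0000000000000000000000000000000000000000000000000000000000000000000000000000000000000000000000000000000000000000000000000000000000000000000032d3345400000000000000000000000000000000000000000000000000000000000000000000000000000000000000000000000000000000000000000000000000000000000000000000000000000734b24b000000000000000000000000000000000000000006b2b24b00000000000000000000000000000000000000000000000000000000000000000000000000000000000000016f34b24c00000000000000000000000000000000000000000014b24a000000000000000000000000000132d4b24c00000012b24a000000000000000000000000000000000000000000000000000000000000000000000000000000000000000000000000000000000000000000000000000000000000000000003249000000000000000000000000000002d4b24b000002b2b24b000000000000000000000000000000000000000000000000000000000000000000000000000000000000000000000000000000000000000000000000000000000000000000000000000000000000000000000000000032d4b24c00002ab2b24c0000000000000000000000000000000000000000000000000000000000000000000000000000000000000000000000000000000000000000000000000000000000000000000000000000071430430000000000000000000000000000000000000000069230430000000000000000000000000000000000000000000000000000000000000000000000000000000000000001671430440000000000000000000000000000000000000000001430420000000000000000000000000000000000000000001230420000000000000000000000000000000000000000000000000000000000000000000000000000000000000000000000000000000000000000000000000000000000000000000030410000000000000000000000000000000000000000029230430000000000000000000000000000000000000000000000000000000000000000000000000000000000000000000000000000000000000000000000000000000000000000000000000000000000000000000000000000000000000000229230440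0000000000000000000000000000a923044000000000000000000000000000000000000000000000000000000000000000000000000000000000000000000000000000000000000000006f3ae3b00000000000000000000000000000000000000000671a63b00000000000000000000000000000000000000000000000000000000000000000000000000000000000000015b73ae3c00000000000000000000000000000000000000000013ae3a00000000000000000000000000000000000000000011a63a00000000000000000000000000000000000000000000000000000000000000000000000000000000000000000373ae3b000000000000000000000000000000000000000000002e3900000000000000000000000000000000000000000000263900000000000000000000000000000000000000000000000000000000000000000000000000000000000000005b73ae3c00000000000000000000000000000000000000000000000000000000000000000000000000000000000000000001a63a00000000000000000000000000000000000000000000000000000000000000000000000000000000000000000000000000000000000000000734ac33000000000000000000000000000006d32c3300000000000000000000000000000000000000000651243300000000000000000000000000000000000000000000000000016f34ac34000000000000000000000000000153532c3400000014ac32000000000000000000000000000000132c3200012b34ac34000000000000000000000000000000112432000000000000000000000000000000000000000000000000000000000000000000000000000000000000000003532c3300000334ac33000000000000000000000000000000002c31000000000000000000000000000000000000000000002431000000000000000000000000000000000000000000000000000000000000000000000000000000000000000053532c3400004b34ac3400000000000000000000000000000000000000000000000000000000000000000000000000000001243200000000000000000000000000000000000000000000000000000000000000000000000000000000000000000000000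0000000000000000000000000000000000000000000000000000006b2aa2b00000000000000000000000000000000000000000630a22b00000000000000000000000000000000000000000000000000000000000000000000000000000000000000014b32aa2c00000000000000000000000000000000000000000012aa2a00012280a22c00000000000000000000000000000010a22a00000000000000000000000000000000000000000000000000000000000000000000000000000000000000000332aa2b000000000000000000000000000000000000000000002a2900000280a22b00000000000000000000000000000000222900000000000000000000000000000000000000000000000000000000000000000000000000000000000000004b32aa2c00000000000000000000000000000000000000000000000000002280a22c00000000000000000000000000000000a22a00000000000000000000000000000000000000000000000000000000000000000000000000000000000000000000000000000000000000000000000000000000000000000000000000000692282300000000000000000000000000000000000000000610202300000000000000000000000000000000000000000000000000000000000000000000000000000000000000014312282400000000000000000000000000000000000000000012282200000000000000000000000000010a20a82400000010202200000000000000000000000000000000000000000000000000000000000000000000000000000000000000000312282300000000000000000000000000000000000000000000282100000000000000000000000000000220a82300000000202100000000000000000000000000000000000000000000000000000000000000000000000000000000000000004312282400000000000000000000000000002a20a82400000000000000000000000000000000000000000000a82200000000202200000000000000000000000000000000000000000000000000000000000000000000000000000000000000000000000000000000000000000000000000000000000000000000000000000671a61b0000000000000000000000000000000000000000000000000000000000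0000000000000000000000000000000000000000000000000000000000000000000000000000013ae3a61c00000000000000000000000000000000000000000011a61a000000000000000000000000000000000000000000000000000000000000000000000000000000000000000000000000000000000000000000000000000000000000000002e3a61b00000000000000000000000000000000000000000000261900000000000000000000000000000000000000000000000000000000000000000000000000000000000000000000000000000000000000000000000000000000000000000003a61a00000000000000000000000000000000000000000000000000000000000000000000000000000000000000000000000000000000000000000000000000000000000000000000000000000000000000000000000000000000000000000000000000000000000000000000000000000000000000000000000000000651241300000000000000000000000000000000000000000000000000000000000000000000000000000000000000000000000000014ac32414000000000000000000000000000132c32414000000000000000000000000000000000000000000112412000000000000000000000000000000000000000000000000000000000000000000000000000000000000000000000000000000000000000000000000000000000000000002c3241300000000000000000000000000000000000000000000241100000000000000000000000000000000000000000000000000000000000000000000000000000000000000000000000000000000000000000000000000000000000000000003241200000000000000000000000000000000000000000000000000000000000000000000000000000000000000000000000000000000000000000000000000000000000000000000000000000000000000000000000000000000000000000000000000000000000000000692280b00000000000000000000000000000630a20b00000000000000000000000000000000000000000000000000000000000000000000000000000000000000000000000000014312280c00000000000000000000000000012aa2a20c00000012280a00000000000000000000000000000010a20a00010202280c0000000000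0000000000000000000000000000000000000000000000000000000000000000000000000000000312280b000000000000000000000000000002a2a20b00000000280900000000000000000000000000000000220900000202280b00000000000000000000000000000000000000000000000000000000000000000000000000000000000000004312280c00000000000000000000000000000002a20a00000002280a00000000000000000000000000000000000000000202280c00000000000000000000000000000000000000000000000000000000000000000000000000000000000000000000000000000000000000000000000000000000000000000000000000000000000000000000000000000000000000000610200300000000000000000000000000000000000000000000000000000000000000000000000000000000000000000000000000000000000000000000000000000000000000012282200400000000000000000000000000000000000000000010200200000000000000000000000000000000000000000000000000000000000000000000000000000000000000000000000000000000000000000000000000000000000000000282200300000000000000000000000000000000000000000000200100000000000000000000000000000000000000000000000000000000000000000000000000000000000000000000000000000000000000000000000000000000000000000002200200000000000000000000000000000a822004000000000000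
def order3 : List Nat := [54, 38, 22, 26, 41, 6, 10, 42, 25, 57, 18, 58, 37, 9, 45, 2, 34, 46, 21, 53, 29, 61, 50, 30, 62, 5, 13, 14, 43, 17, 27, 59, 1, 33, 39, 11, 47, 20, 49, 23, 55, 31, 63, 4, 36, 7, 15, 16, 52, 24, 19, 0, 32, 8, 40, 3, 35, 48, 56, 51, 44, 28, 60, 12]
def chi1N : Nat := 0x651
def chi2N : Nat := 0x29364931a449
def chi3N : Nat := 0x6ed4924926db24924924924991bb646db492249249249249
namespace SierpP4

def enc : ∀ {n : ℕ}, W n → ℕ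
  | 0, _ => 0
  | (_+1), u => (u 0 : ℕ) + 4 * enc (Fin.tail u)

def dec (n : ℕ) (m : ℕ) : W n := fun j => ⟨m / 4^(j : ℕ) % 4, Nat.mod_lt _ (by norm_num)⟩

lemma enc_lt : ∀ {n : ℕ} (u : W n), enc u < 4^n := by
  intro n
  induction n with
  | zero => intro u; simp [enc]
  | succ n ih =>
    intro u
    have h1 := ih (Fin.tail u)
    have h2 : (u 0 : ℕ) < 4 := (u 0).isLt
    have : (4:ℕ)^(n+1) = 4 * 4^n := by ring
    simp only [enc]
    omega

lemma dec_tail {n : ℕ} (m : ℕ) : Fin.tail (dec (n+1) m) = dec n (m / 4) := by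
  funext j
  apply Fin.ext
  show m / 4^((j : ℕ)+1) % 4 = m / 4 / 4^(j:ℕ) % 4
  rw [Nat.div_div_eq_div_mul]
  congr 2
  rw [pow_succ']

lemma dec_enc : ∀ {n : ℕ} (u : W n), dec n (enc u) = u := by
  intro n
  induction n with
  | zero => intro u; funext j; exact j.elim0
  | succ n ih =>
    intro u
    funext j
    induction j using Fin.cases with
    | zero =>
      apply Fin.ext
      show enc u / 4^(0:ℕ) % 4 = (u 0 : ℕ)
      have h2 : (u 0 : ℕ) < 4 := (u 0).isLt
      simp only [pow_zero, Nat.div_one, enc]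
      omega
    | succ j =>
      have h1 : Fin.tail (dec (n+1) (enc u)) j = (Fin.tail u) j := by
        rw [dec_tail]
        have : enc u / 4 = enc (Fin.tail u) := by
          have h2 : (u 0 : ℕ) < 4 := (u 0).isLt
          simp only [enc]
          omega
        rw [this, ih]
      exact h1

lemma enc_dec : ∀ {n : ℕ} (m : ℕ), m < 4^n → enc (dec n m) = m := by
  intro n
  induction n with
  | zero => intro m hm; simp [enc]; omega
  | succ n ih =>
    intro m hm
    have h4 : (4:ℕ)^(n+1) = 4 * 4^n := by ring
    have hdiv : m / 4 < 4^n := by omega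
    show (dec (n+1) m 0 : ℕ) + 4 * enc (Fin.tail (dec (n+1) m)) = m
    rw [dec_tail, ih _ hdiv]
    show m / 4^(0:ℕ) % 4 + 4 * (m/4) = m
    simp only [pow_zero, Nat.div_one]
    omega

lemma enc_inj {n : ℕ} {u v : W n} (h : enc u = enc v) : u = v := by
  rw [← dec_enc u, ← dec_enc v, h]

/-- color lookup in a packed table -/
def chiF (C m : ℕ) : ℕ := (C >>> (3*m)) % 8

def chi3v (m : ℕ) : ℕ := chiF chi3N m

def suff3 {n : ℕ} (h : 3 ≤ n) (u : W n) : W 3 :=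
  fun j => u ⟨n - 3 + (j : ℕ), by have := j.isLt; omega⟩

/-- the 5-packing coloring for all n ≥ 3 -/
def col3 {n : ℕ} (h : 3 ≤ n) (u : W n) : ℕ := chi3v (enc (suff3 h u))

lemma suff3_eq_self (u : W 3) : suff3 le_rfl u = u := by
  funext j
  show u _ = u j
  congr 1
  apply Fin.ext
  show 3 - 3 + (j : ℕ) = (j : ℕ)
  omega

lemma suff3_tail {n : ℕ} (h : 3 ≤ n) (h' : 3 ≤ n + 1) (u : W (n+1)) :
    suff3 h' u = suff3 h (Fin.tail u) := by
  funext j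
  show u _ = u (Fin.succ _)
  congr 1
  apply Fin.ext
  show n + 1 - 3 + (j : ℕ) = n - 3 + (j : ℕ) + 1
  omega

lemma dc_suff : ∀ {n : ℕ} (h : 3 ≤ n) (u : W n) (x : ℕ), x ≤ 3 →
    min 7 (dc 3 (suff3 h u) x) ≤ dc n u x := by
  intro n h
  induction n, h using Nat.le_induction with
  | base =>
    intro u x hx
    rw [suff3_eq_self]
    exact min_le_right _ _
  | succ n hn ih =>
    intro u x hx
    have h8 : (8:ℕ) ≤ 2^n := by
      calc (8:ℕ) = 2^3 := by norm_num
      _ ≤ 2^n := Nat.pow_le_pow_right (by norm_num) hn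
    rw [dc_succ u]
    split_ifs with h1 h2
    · rw [suff3_tail hn (by omega)]
      exact ih (Fin.tail u) x hx
    · have : min 7 (dc 3 (suff3 (by omega : 3 ≤ n+1) u) x) ≤ 7 := min_le_left _ _
      omega
    · have : min 7 (dc 3 (suff3 (by omega : 3 ≤ n+1) u) x) ≤ 7 := min_le_left _ _
      omega

lemma enc_lt64 (u : W 3) : enc u < 64 := by
  have := enc_lt u
  norm_num at this
  exact this

lemma chi_bounds : ∀ m < 64, 1 ≤ chi3v m ∧ chi3v m ≤ 5 := by decide

lemma U1 : ∀ m1 < 64, ∀ m2 < 64, m1 ≠ m2 → chi3v m1 = chi3v m2 →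
    chi3v m1 < D 3 (dec 3 m1) (dec 3 m2) := by decide

lemma U2 : ∀ a < 3, ∀ s < 64, ∀ t < 64, chi3v s = chi3v t →
    chi3v s < dc 3 (dec 3 s) (a+1) + 1 + dc 3 (dec 3 t) a := by decide

end SierpP4
namespace SierpP4

lemma main5 : ∀ {n : ℕ} (h : 3 ≤ n) (u v : W n), u ≠ v → col3 h u = col3 h v →
    col3 h u < D n u v := by
  intro n h
  induction n, h using Nat.le_induction with
  | base =>
    intro u v hne hc
    unfold col3 chi3v at hc ⊢
    rw [suff3_eq_self u, suff3_eq_self v] at hc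
    rw [suff3_eq_self u]
    have h1 : enc u ≠ enc v := fun he => hne (enc_inj he)
    have := U1 (enc u) (enc_lt64 u) (enc v) (enc_lt64 v) h1
    rw [dec_enc, dec_enc] at this
    exact this hc
  | succ n hn ih =>
    intro u v hne hc
    have h8 : (8:ℕ) ≤ 2^n := by
      calc (8:ℕ) = 2^3 := by norm_num
      _ ≤ 2^n := Nat.pow_le_pow_right (by norm_num) hn
    have h3' : 3 ≤ n + 1 := by omega
    unfold col3 at hc ⊢
    rw [suff3_tail hn h3' u, suff3_tail hn h3' v] at hc
    rw [suff3_tail hn h3' u]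
    have hbu := chi_bounds (enc (suff3 hn (Fin.tail u))) (enc_lt64 _)
    have hbv := chi_bounds (enc (suff3 hn (Fin.tail v))) (enc_lt64 _)
    rw [D_succ]
    rcases Nat.lt_trichotomy ((u 0 : ℕ)) ((v 0 : ℕ)) with hlt | heq | hgt
    · rw [if_neg (by omega), if_pos hlt]
      rcases Nat.lt_or_ge ((u 0 : ℕ) + 1) ((v 0 : ℕ)) with hfar | hnear
      · have hmul : 2*(2^n-1) ≤ ((v 0 : ℕ) - (u 0 : ℕ) - 1)*2*(2^n-1) :=
          Nat.mul_le_mul_right _ (by omega)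
        omega
      · have hb' : (v 0 : ℕ) - 1 = (u 0 : ℕ) := by omega
        rw [hb']
        have m1 := dc_suff hn (Fin.tail u) ((u 0 : ℕ)+1) (by have := (v 0).isLt; omega)
        have m2 := dc_suff hn (Fin.tail v) ((u 0 : ℕ)) (by have := (u 0).isLt; omega)
        have hu2 := U2 ((u 0 : ℕ)) (by have := (v 0).isLt; omega)
          (enc (suff3 hn (Fin.tail u))) (enc_lt64 _)
          (enc (suff3 hn (Fin.tail v))) (enc_lt64 _) hc
        rw [dec_enc, dec_enc] at hu2
        have hz : ((v 0 : ℕ) - (u 0 : ℕ) - 1)*2*(2^n-1) = 0 := by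
          rw [show ((v 0 : ℕ) - (u 0 : ℕ) - 1) = 0 from by omega]
          simp
        omega
    · rw [if_pos heq]
      have htne : Fin.tail u ≠ Fin.tail v := by
        intro hteq
        apply hne
        funext j
        induction j using Fin.cases with
        | zero => exact Fin.ext heq
        | succ j => exact congrFun hteq j
      have := ih (Fin.tail u) (Fin.tail v) htne hc
      exact this
    · rw [if_neg (by omega), if_neg (by omega)]
      rcases Nat.lt_or_ge ((v 0 : ℕ) + 1) ((u 0 : ℕ)) with hfar | hnear
      · have hmul : 2*(2^n-1) ≤ ((u 0 : ℕ) - (v 0 : ℕ) - 1)*2*(2^n-1) :=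
          Nat.mul_le_mul_right _ (by omega)
        omega
      · have hb' : (u 0 : ℕ) - 1 = (v 0 : ℕ) := by omega
        rw [hb']
        have m1 := dc_suff hn (Fin.tail u) ((v 0 : ℕ)) (by have := (v 0).isLt; omega)
        have m2 := dc_suff hn (Fin.tail v) ((v 0 : ℕ)+1) (by have := (u 0).isLt; omega)
        have hu2 := U2 ((v 0 : ℕ)) (by have := (u 0).isLt; omega)
          (enc (suff3 hn (Fin.tail v))) (enc_lt64 _)
          (enc (suff3 hn (Fin.tail u))) (enc_lt64 _) hc.symm
        rw [dec_enc, dec_enc] at hu2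
        have hz : ((u 0 : ℕ) - (v 0 : ℕ) - 1)*2*(2^n-1) = 0 := by
          rw [show ((u 0 : ℕ) - (v 0 : ℕ) - 1) = 0 from by omega]
          simp
        omega

lemma isPacking5 {n : ℕ} (h : 3 ≤ n) : IsPackingColoring (G n) 5 (col3 h) := by
  constructor
  · intro v
    exact chi_bounds (enc (suff3 h v)) (enc_lt64 _)
  · intro u v hne hc p
    have h1 := main5 h u v hne hc
    have h2 := walk_ge_D p
    omega

end SierpP4
namespace SierpP4

def chi1v (m : ℕ) : ℕ := chiF chi1N m
def chi2v (m : ℕ) : ℕ := chiF chi2N m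
def col1 (u : W 1) : ℕ := chi1v (enc u)
def col2 (u : W 2) : ℕ := chi2v (enc u)

lemma enc_lt4 (u : W 1) : enc u < 4 := by
  have := enc_lt u; norm_num at this; exact this

lemma enc_lt16 (u : W 2) : enc u < 16 := by
  have := enc_lt u; norm_num at this; exact this

lemma chi1_bounds : ∀ m < 4, 1 ≤ chi1v m ∧ chi1v m ≤ 3 := by decide
lemma chi2_bounds : ∀ m < 16, 1 ≤ chi2v m ∧ chi2v m ≤ 4 := by decide

lemma U1a : ∀ m1 < 4, ∀ m2 < 4, m1 ≠ m2 → chi1v m1 = chi1v m2 →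
    chi1v m1 < D 1 (dec 1 m1) (dec 1 m2) := by decide

lemma U1b : ∀ m1 < 16, ∀ m2 < 16, m1 ≠ m2 → chi2v m1 = chi2v m2 →
    chi2v m1 < D 2 (dec 2 m1) (dec 2 m2) := by decide

lemma isPacking1 : IsPackingColoring (G 1) 3 col1 := by
  constructor
  · intro v; exact chi1_bounds (enc v) (enc_lt4 v)
  · intro u v hne hc p
    have h1 := U1a (enc u) (enc_lt4 u) (enc v) (enc_lt4 v)
      (fun he => hne (enc_inj he)) hc
    rw [dec_enc, dec_enc] at h1
    have h2 := walk_ge_D p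
    unfold col1 at *
    omega

lemma isPacking2 : IsPackingColoring (G 2) 4 col2 := by
  constructor
  · intro v; exact chi2_bounds (enc v) (enc_lt16 v)
  · intro u v hne hc p
    have h1 := U1b (enc u) (enc_lt16 u) (enc v) (enc_lt16 v)
      (fun he => hne (enc_inj he)) hc
    rw [dec_enc, dec_enc] at h1
    have h2 := walk_ge_D p
    unfold col2 at *
    omega

end SierpP4
namespace SierpP4

instance adjDec {n : ℕ} : DecidableRel (G n).Adj := fun u v =>
  inferInstanceAs (Decidable (∃ i : Fin n,
    (∀ j, j < i → u j = v j) ∧ pathP4.Adj (u i) (v i) ∧ ∀ j, i < j → u j = v i ∧ v j = u i))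

def distT (dt N a b : ℕ) : ℕ := (dt >>> (3*(N*a+b))) % 8
def pv (x i : ℕ) : ℕ := (x >>> (3+6*i)) % 64
def pathEnt (pt N a b : ℕ) : ℕ := (pt >>> (48*(N*a+b))) % (2^48)

def adjB (n a b : ℕ) : Bool := decide ((G n).Adj (dec n a) (dec n b))

def chk (n dt pt N a b : ℕ) : Bool :=
  let x := pathEnt pt N a b
  let k := x % 8
  (k == distT dt N a b) && (pv x 0 == a) && (pv x k == b) &&
  (List.range k).all (fun i => adjB n (pv x i) (pv x (i+1)))

def certB (n t dt pt : ℕ) : Bool :=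
  (List.range (4^n)).all fun a => (List.range (4^n)).all fun b =>
    (a == b) || decide (t < distT dt (4^n) a b) || chk n dt pt (4^n) a b

lemma walk_of_chain {n : ℕ} (x : ℕ) : ∀ (m j k : ℕ), j + m = k →
    (∀ i, i < k → adjB n (pv x i) (pv x (i+1)) = true) →
    Nonempty {p : (G n).Walk (dec n (pv x j)) (dec n (pv x k)) // p.length = m} := by
  intro m
  induction m with
  | zero =>
    intro j k h _
    have : j = k := by omega
    subst this
    exact ⟨SimpleGraph.Walk.nil, rfl⟩
  | succ m ih =>
    intro j k hjk hadj
    have ha : (G n).Adj (dec n (pv x j)) (dec n (pv x (j+1))) :=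
      of_decide_eq_true (hadj j (by omega))
    obtain ⟨p, hp⟩ := ih (j+1) k (by omega) hadj
    exact ⟨SimpleGraph.Walk.cons ha p, by simp [hp]⟩

lemma cert_sound {n t : ℕ} {dt pt : ℕ} (hc : certB n t dt pt = true) :
    ∀ a b, a < 4^n → b < 4^n → a ≠ b → distT dt (4^n) a b ≤ t →
    Nonempty {p : (G n).Walk (dec n a) (dec n b) // p.length = distT dt (4^n) a b} := by
  intro a b ha hb hne hle
  have h1 := (List.all_eq_true.mp hc) a (List.mem_range.mpr ha)
  have h2 := (List.all_eq_true.mp h1) b (List.mem_range.mpr hb)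
  simp only [Bool.or_eq_true, beq_iff_eq, decide_eq_true_eq] at h2
  rcases h2 with (h2 | h2) | h2
  · exact absurd h2 hne
  · omega
  · unfold chk at h2
    simp only [Bool.and_eq_true, beq_iff_eq, List.all_eq_true] at h2
    obtain ⟨⟨⟨hk, h0⟩, hkb⟩, hadj⟩ := h2
    obtain ⟨pp⟩ := walk_of_chain (pathEnt pt (4^n) a b)
      (pathEnt pt (4^n) a b % 8) 0 (pathEnt pt (4^n) a b % 8) (by omega)
      (fun i hi => hadj i (List.mem_range.mpr hi))
    rw [← hk]
    rw [h0, hkb] at pp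
    exact ⟨pp⟩

def compat (dt N v col : ℕ) (asg : List (ℕ × ℕ)) : Bool :=
  asg.all fun q => (q.2 != col) || decide (col < distT dt N q.1 v)

def search (dt N t : ℕ) : List ℕ → List (ℕ × ℕ) → Bool
  | [], _ => true
  | v :: rest, asg =>
    (List.range' 1 t).any fun col => compat dt N v col asg && search dt N t rest ((v, col) :: asg)

lemma search_sound {n t : ℕ} (dt pt : ℕ) (c : W n → ℕ)
    (hcol : IsPackingColoring (G n) t c)
    (hcert : certB n t dt pt = true) :
    ∀ (pending : List ℕ), ∀ (asg : List (ℕ × ℕ)),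
      pending.Nodup → (∀ x ∈ pending, x < 4^n) →
      (∀ q ∈ asg, q.1 < 4^n ∧ q.2 = c (dec n q.1) ∧ ∀ x ∈ pending, q.1 ≠ x) →
      search dt (4^n) t pending asg = true := by
  intro pending
  induction pending with
  | nil => intro asg _ _ _; rfl
  | cons v rest ih =>
    intro asg hnd hbd hasg
    have hvlt : v < 4^n := hbd v List.mem_cons_self
    have hcv := hcol.1 (dec n v)
    show (List.range' 1 t).any _ = true
    rw [List.any_eq_true]
    refine ⟨c (dec n v), List.mem_range'_1.mpr ⟨hcv.1, by omega⟩, ?_⟩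
    rw [Bool.and_eq_true]
    constructor
    · -- compat
      unfold compat
      rw [List.all_eq_true]
      intro q hq
      obtain ⟨hq1, hq2, hq3⟩ := hasg q hq
      rw [Bool.or_eq_true]
      by_cases hcc : q.2 = c (dec n v)
      · right
        rw [decide_eq_true_eq]
        by_contra hge
        push_neg at hge
        have hdle : distT dt (4^n) q.1 v ≤ t := by omega
        have hqnev : q.1 ≠ v := hq3 v List.mem_cons_self
        obtain ⟨p, hp⟩ := cert_sound hcert q.1 v hq1 hvlt hqnev hdle
        have hdne : dec n q.1 ≠ dec n v := by
          intro hdd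
          apply hqnev
          rw [← enc_dec q.1 hq1, ← enc_dec v hvlt, hdd]
        have := hcol.2 (dec n q.1) (dec n v) hdne (by rw [← hq2, hcc]) p
        omega
      · left
        simp [hcc]
    · -- recursive call
      apply ih
      · exact (List.nodup_cons.mp hnd).2
      · intro x hx; exact hbd x (List.mem_cons_of_mem _ hx)
      · intro q hq
        rcases List.mem_cons.mp hq with rfl | hq'
        · refine ⟨hvlt, rfl, fun x hx hvx => ?_⟩
          exact (List.nodup_cons.mp hnd).1 (by rw [show v = x from hvx]; exact hx)
        · obtain ⟨hq1, hq2, hq3⟩ := hasg q hq'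
          exact ⟨hq1, hq2, fun x hx => hq3 x (List.mem_cons_of_mem _ hx)⟩

end SierpP4
namespace SierpP4

set_option maxHeartbeats 4000000

lemma no2_G1 : ¬ ∃ c : W 1 → ℕ, IsPackingColoring (G 1) 2 c := by
  rintro ⟨c, hc⟩
  have hs := search_sound dt1 pt1 c hc (by decide) order1 []
    (by decide) (by decide) (fun q hq => absurd hq List.not_mem_nil)
  rw [show search dt1 (4^1) 2 order1 [] = false from by decide] at hs
  exact Bool.false_ne_true hs

lemma no3_G2 : ¬ ∃ c : W 2 → ℕ, IsPackingColoring (G 2) 3 c := by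
  rintro ⟨c, hc⟩
  have hs := search_sound dt2 pt2 c hc (by decide) order2 []
    (by decide) (by decide) (fun q hq => absurd hq List.not_mem_nil)
  rw [show search dt2 (4^2) 3 order2 [] = false from by decide] at hs
  exact Bool.false_ne_true hs

lemma no4_G3 : ¬ ∃ c : W 3 → ℕ, IsPackingColoring (G 3) 4 c := by
  rintro ⟨c, hc⟩
  have hs := search_sound dt3 pt3 c hc (by decide) order3 []
    (by decide) (by decide) (fun q hq => absurd hq List.not_mem_nil)
  rw [show search dt3 (4^3) 4 order3 [] = false from by decide] at hs
  exact Bool.false_ne_true hs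

def emb {n : ℕ} (h : 3 ≤ n) (u : W 3) : W n :=
  fun j => if hj : (j : ℕ) < n - 3 then (0 : Fin 4)
           else u ⟨(j : ℕ) - (n - 3), by have := j.isLt; omega⟩

lemma emb_at {n : ℕ} (h : 3 ≤ n) (u : W 3) (j : Fin 3) :
    emb h u ⟨n - 3 + (j : ℕ), by have := j.isLt; omega⟩ = u j := by
  unfold emb
  rw [dif_neg (show ¬(n - 3 + (j:ℕ) < n - 3) from by omega)]
  congr 1
  apply Fin.ext
  show n - 3 + (j : ℕ) - (n - 3) = (j : ℕ)
  omega

lemma emb_adj {n : ℕ} (h : 3 ≤ n) {u v : W 3} (ha : (G 3).Adj u v) :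
    (G n).Adj (emb h u) (emb h v) := by
  obtain ⟨i, h1, h2, h3⟩ := ha
  have hi3 := i.isLt
  refine ⟨⟨n - 3 + (i : ℕ), by omega⟩, fun j hj => ?_, ?_, fun j hj => ?_⟩
  · rw [Fin.lt_def] at hj
    have hj' : (j : ℕ) < n - 3 + (i : ℕ) := hj
    unfold emb
    by_cases hc : (j : ℕ) < n - 3
    · rw [dif_pos hc, dif_pos hc]
    · rw [dif_neg hc, dif_neg hc]
      apply h1
      rw [Fin.lt_def]
      show (j : ℕ) - (n - 3) < (i : ℕ)
      omega
  · rw [emb_at h u i, emb_at h v i]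
    exact h2
  · rw [Fin.lt_def] at hj
    have hj' : n - 3 + (i : ℕ) < (j : ℕ) := hj
    have hjn := j.isLt
    rw [emb_at h v i, emb_at h u i]
    unfold emb
    rw [dif_neg (show ¬((j:ℕ) < n - 3) from by omega),
        dif_neg (show ¬((j:ℕ) < n - 3) from by omega)]
    exact h3 ⟨(j : ℕ) - (n - 3), by omega⟩
      (by rw [Fin.lt_def]; show (i:ℕ) < (j:ℕ) - (n-3); omega)

def embHom {n : ℕ} (h : 3 ≤ n) : G 3 →g G n :=
  ⟨emb h, fun ha => emb_adj h ha⟩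

lemma pull {n : ℕ} (h : 3 ≤ n) (t : ℕ) (c : W n → ℕ)
    (hc : IsPackingColoring (G n) t c) :
    IsPackingColoring (G 3) t (fun u => c (emb h u)) := by
  constructor
  · intro v; exact hc.1 _
  · intro u v hne hcc p
    have hne' : emb h u ≠ emb h v := by
      intro he
      apply hne
      funext j
      rw [← emb_at h u j, ← emb_at h v j, he]
    have hw := hc.2 _ _ hne' hcc (p.map (embHom h))
    exact lt_of_lt_of_eq hw (SimpleGraph.Walk.length_map _ _)

lemma upward {V : Type*} (Gr : SimpleGraph V) {t t' : ℕ} (h : t ≤ t') (c : V → ℕ)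
    (hc : IsPackingColoring Gr t c) : IsPackingColoring Gr t' c :=
  ⟨fun v => ⟨(hc.1 v).1, le_trans (hc.1 v).2 h⟩, hc.2⟩

lemma chromEq {V : Type*} (Gr : SimpleGraph V) (k : ℕ)
    (hmem : ∃ c, IsPackingColoring Gr k c)
    (hno : ¬ ∃ c, IsPackingColoring Gr (k-1) c) :
    packingChromatic Gr = k := by
  apply le_antisymm
  · exact Nat.sInf_le hmem
  · apply le_csInf ⟨k, hmem⟩
    intro m hm
    by_contra hlt
    push_neg at hlt
    obtain ⟨c, hc⟩ := hm
    exact hno ⟨c, upward _ (by omega) c hc⟩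

end SierpP4
/-- `χρ(S^1_{P_4}) = 3`, `χρ(S^2_{P_4}) = 4`, and `χρ(S^n_{P_4}) = 5` for all `n ≥ 3`. -/
theorem packingChromatic_genSierpinski_P4 :
    packingChromatic (genSierpinski pathP4 1) = 3 ∧
    packingChromatic (genSierpinski pathP4 2) = 4 ∧
    ∀ n : ℕ, 3 ≤ n → packingChromatic (genSierpinski pathP4 n) = 5 := by
  refine ⟨?_, ?_, ?_⟩
  · exact SierpP4.chromEq (SierpP4.G 1) 3 ⟨SierpP4.col1, SierpP4.isPacking1⟩ SierpP4.no2_G1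
  · exact SierpP4.chromEq (SierpP4.G 2) 4 ⟨SierpP4.col2, SierpP4.isPacking2⟩ SierpP4.no3_G2
  · intro n hn
    refine SierpP4.chromEq (SierpP4.G n) 5 ⟨SierpP4.col3 hn, SierpP4.isPacking5 hn⟩ ?_
    rintro ⟨c, hc⟩
    exact SierpP4.no4_G3 ⟨_, SierpP4.pull hn 4 c hc⟩
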